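/- In the setting of the previous instability example but under the Universal Tracking algorithm: the emulated queue satisfies Q^e(t) = 0 for all t ≥ 0, hence the controller attempts to serve 10 packets in every slot t ≥ 2, and the real backlog satisfies Q(t) = 20 for all t ≥ 2; in particular the long-run time-average backlog equals 20 and the queue is bounded (stable). -/
import Mathlib


open Finset Filter

/-- Universal Tracking stabilizes the threshold-policy example: the emulated
queue stays at 0, the controller serves 10 packets every slot `t ≥ 2`, the
real backlog equals 20 for all `t ≥ 2`, the queue is bounded, and the
long-run time-average backlog equals 20. -/
theorem stmt7 (Q Qe F : ℕ → ℝ)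
    (h0 : Q 0 = 0) (he0 : Qe 0 = 0)
    (hF0 : F 0 = 0) (hF1 : F 1 = 0)
    (hF : ∀ t, 2 ≤ t → F t = if Qe (t - 2) + 10 ≤ 10 then 10 else 0)
    (hQe : ∀ t, 2 ≤ t → Qe (t - 2 + 1) = Qe (t - 2) + 10 - F t)
    (hQ : ∀ t, Q (t + 1) = max 0 (Q t + 10 - F t)) :
    (∀ t, Qe t = 0) ∧
    (∀ t, 2 ≤ t → F t = 10) ∧
    (∀ t, 2 ≤ t → Q t = 20) ∧
    (∃ M : ℝ, ∀ t, Q t ≤ M) ∧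
    Tendsto (fun T : ℕ => (∑ t ∈ Finset.range T, Q t) / (T : ℝ))
      atTop (nhds 20) := by
  have hQe0 : ∀ t, Qe t = 0 := by
    intro t
    induction t with
    | zero => exact he0
    | succ s ih =>
      have h2 : (2 : ℕ) ≤ s + 2 := by omega
      have hs : s + 2 - 2 = s := by omega
      have hFs : F (s + 2) = 10 := by
        rw [hF (s + 2) h2, hs, ih]; norm_num
      have := hQe (s + 2) h2
      rw [hs, ih, hFs] at this
      linarith
  have hF10 : ∀ t, 2 ≤ t → F t = 10 := by
    intro t ht
    rw [hF t ht, hQe0]; norm_num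
  have hQ1 : Q 1 = 10 := by
    have := hQ 0; rw [h0, hF0] at this; simpa using this
  have hQ2 : Q 2 = 20 := by
    have := hQ 1; rw [hQ1, hF1] at this; rw [this]; norm_num
  have hQ20 : ∀ t, 2 ≤ t → Q t = 20 := by
    intro t ht
    induction t with
    | zero => omega
    | succ s ih =>
      rcases Nat.lt_or_ge s 2 with hs | hs
      · interval_cases s
        · omega
        · exact hQ2
      · have := hQ s
        rw [ih hs, hF10 s hs] at this
        simpa using this
  refine ⟨hQe0, hF10, hQ20, ⟨20, ?_⟩, ?_⟩
  · intro t
    rcases Nat.lt_or_ge t 2 with ht | ht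
    · interval_cases t
      · rw [h0]; norm_num
      · rw [hQ1]; norm_num
    · rw [hQ20 t ht]
  · have hsum : ∀ T, 2 ≤ T → (∑ t ∈ Finset.range T, Q t) = 20 * T - 30 := by
      intro T hT
      induction T with
      | zero => omega
      | succ s ih =>
        rcases Nat.lt_or_ge s 2 with hs | hs
        · interval_cases s
          · omega
          · simp [Finset.sum_range_succ, h0, hQ1]
            norm_num
        · rw [Finset.sum_range_succ, ih hs, hQ20 s hs]
          push_cast; ring
    have hev : (fun T : ℕ => 20 - 30 / (T : ℝ)) =ᶠ[atTop]
        (fun T : ℕ => (∑ t ∈ Finset.range T, Q t) / (T : ℝ)) := by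
      filter_upwards [Filter.eventually_ge_atTop 2] with T hT
      have hTpos : (0 : ℝ) < (T : ℝ) := by exact_mod_cast (by omega : 0 < T)
      rw [hsum T hT]
      field_simp
    have : Tendsto (fun T : ℕ => 20 - 30 / (T : ℝ)) atTop (nhds 20) := by
      have h30 : Tendsto (fun T : ℕ => 30 / (T : ℝ)) atTop (nhds 0) :=
        tendsto_const_nhds.div_atTop tendsto_natCast_atTop_atTop
      simpa using tendsto_const_nhds.sub h30
    exact this.congr' hev
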